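/- Under the similarity map with row-stochastic weights, each component satisfies S_i(W) = exp_𝟙ₛ( ∑_{j∈N_i} ω_{ij} ( exp_𝟙ₛ^{-1}(W_j) − (1/ρ) D_j ) ), where 𝟙ₛ = (1/c,…,1/c) is the barycenter. -/

import Mathlib

open Finset Real

/-- The open probability simplex in ℝ^c. -/
def simplexS (c : ℕ) : Set (Fin c → ℝ) := {p | (∀ i, 0 < p i) ∧ ∑ i, p i = 1}

/-- Tangent space: vectors with zero coordinate sum. -/
def T0 (c : ℕ) : Set (Fin c → ℝ) := {v | ∑ i, v i = 0}

/-- Orthogonal projection onto T0. -/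
noncomputable def proj0 {c : ℕ} (u : Fin c → ℝ) : Fin c → ℝ :=
  fun i => u i - (∑ j, u j) / c

/-- exp_p(v) = (p ⊙ e^v)/⟨p, e^v⟩. -/
noncomputable def expMap {c : ℕ} (p v : Fin c → ℝ) : Fin c → ℝ :=
  fun i => p i * Real.exp (v i) / ∑ j, p j * Real.exp (v j)

/-- Inverse of exp_p restricted to T0: exp_p⁻¹(q) = Π₀[log(q/p)]. -/
noncomputable def expInv {c : ℕ} (p q : Fin c → ℝ) : Fin c → ℝ :=
  proj0 (fun i => Real.log (q i / p i))

/-- R_q[u] = q ⊙ u − ⟨q,u⟩ q. -/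
def Rmap {c : ℕ} (q u : Fin c → ℝ) : Fin c → ℝ :=
  fun i => q i * u i - (∑ j, q j * u j) * q i

/-- Barycenter 𝟙ₛ = (1/c,…,1/c). -/
noncomputable def bary (c : ℕ) : Fin c → ℝ := fun _ => 1 / c

/-- The i-th component of the similarity map, in the form
S_i(W) = exp_{𝟙ₛ}( ∑_{j∈N_i} ω_{ij}(exp_{𝟙ₛ}⁻¹(W_j) − D_j/ρ) ). -/
noncomputable def Sim {n c : ℕ} (N : Fin n → Finset (Fin n)) (ω : Fin n → Fin n → ℝ)
    (D : Fin n → Fin c → ℝ) (ρ : ℝ) (W : Fin n → Fin c → ℝ) (i : Fin n) : Fin c → ℝ :=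
  expMap (bary c) (∑ j ∈ N i, ω i j • (expInv (bary c) (W j) - ρ⁻¹ • D j))

/-- Exp_p(v) = (p ⊙ e^{v/p})/⟨p, e^{v/p}⟩. -/
noncomputable def ExpMap {c : ℕ} (p v : Fin c → ℝ) : Fin c → ℝ :=
  fun i => p i * Real.exp (v i / p i) / ∑ j, p j * Real.exp (v j / p j)

/-- Exp_p⁻¹(q) = R_p[log(q/p)]. -/
noncomputable def ExpInv {c : ℕ} (p q : Fin c → ℝ) : Fin c → ℝ :=
  Rmap p (fun i => Real.log (q i / p i))

lemma norm_ratio {c : ℕ} (f g : Fin c → ℝ) (hf : ∀ k, 0 < f k) (hg : ∀ k, 0 < g k)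
    (h : ∀ k l, f k * g l = f l * g k) (k : Fin c) :
    f k / ∑ m, f m = g k / ∑ m, g m := by
  have hsf : 0 < ∑ m, f m := Finset.sum_pos (fun m _ => hf m) ⟨k, Finset.mem_univ k⟩
  have hsg : 0 < ∑ m, g m := Finset.sum_pos (fun m _ => hg m) ⟨k, Finset.mem_univ k⟩
  rw [div_eq_div_iff hsf.ne' hsg.ne', Finset.mul_sum, Finset.mul_sum]
  exact Finset.sum_congr rfl fun l _ => (h k l).trans (mul_comm _ _)

theorem stmt10 {n c : ℕ} (N : Fin n → Finset (Fin n)) (ω : Fin n → Fin n → ℝ)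
    (D : Fin n → Fin c → ℝ) (ρ : ℝ) (hρ : 0 < ρ)
    (hself : ∀ i, i ∈ N i)
    (hωpos : ∀ i, ∀ j ∈ N i, 0 < ω i j)
    (hωsum : ∀ i, ∑ j ∈ N i, ω i j = 1)
    (W : Fin n → Fin c → ℝ) (hW : ∀ j, W j ∈ simplexS c) (i : Fin n) :
    ExpMap (W i) (∑ j ∈ N i, ω i j • ExpInv (W i) (expMap (W j) (-(ρ⁻¹ • D j)))) =
      Sim N ω D ρ W i := by
  ext k
  have hc : 0 < (c : ℝ) := by exact_mod_cast k.pos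
  set p : Fin c → ℝ := W i with hpdef
  have hp : ∀ m, 0 < p m := (hW i).1
  set Z : Fin n → ℝ := fun j => ∑ m, W j m * Real.exp (-(ρ⁻¹ * D j m)) with hZdef
  have hZ : ∀ j, 0 < Z j := fun j =>
    Finset.sum_pos (fun m _ => mul_pos ((hW j).1 m) (Real.exp_pos _)) ⟨k, Finset.mem_univ k⟩
  have hq : ∀ j m, expMap (W j) (-(ρ⁻¹ • D j)) m = W j m * Real.exp (-(ρ⁻¹ * D j m)) / Z j := by
    intro j m
    simp [expMap, hZdef, Pi.neg_apply, Pi.smul_apply, smul_eq_mul]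
  have hqpos : ∀ j m, 0 < expMap (W j) (-(ρ⁻¹ • D j)) m := by
    intro j m
    rw [hq]
    exact div_pos (mul_pos ((hW j).1 m) (Real.exp_pos _)) (hZ j)
  have hlog : ∀ j m, Real.log (expMap (W j) (-(ρ⁻¹ • D j)) m / p m)
      = Real.log (W j m) - ρ⁻¹ * D j m - Real.log (Z j) - Real.log (p m) := by
    intro j m
    rw [Real.log_div (hqpos j m).ne' (hp m).ne', hq,
      Real.log_div (mul_pos ((hW j).1 m) (Real.exp_pos _)).ne' (hZ j).ne',
      Real.log_mul ((hW j).1 m).ne' (Real.exp_pos _).ne', Real.log_exp]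
    ring
  -- abbreviations
  set L : Fin n → Fin c → ℝ :=
    fun j m => Real.log (expMap (W j) (-(ρ⁻¹ • D j)) m / p m) with hLdef
  set C : Fin n → ℝ := fun j => ∑ m, p m * L j m with hCdef
  set A : Fin c → ℝ :=
    fun m => ∑ j ∈ N i, ω i j * (Real.log (W j m) - ρ⁻¹ * D j m) with hAdef
  set α : ℝ := ∑ j ∈ N i, ω i j * (-Real.log (Z j) - C j) with hαdef
  set V : Fin c → ℝ :=
    ∑ j ∈ N i, ω i j • ExpInv p (expMap (W j) (-(ρ⁻¹ • D j))) with hVdef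
  have hVk : ∀ m, V m = p m * (A m + α - Real.log (p m)) := by
    intro m
    have h1 : V m = ∑ j ∈ N i, ω i j * (p m * L j m - C j * p m) := by
      simp only [hVdef, Finset.sum_apply, Pi.smul_apply, smul_eq_mul, ExpInv, Rmap, hLdef, hCdef]
    have h2 : ∀ j ∈ N i, ω i j * (p m * L j m - C j * p m)
        = p m * (ω i j * (Real.log (W j m) - ρ⁻¹ * D j m) - ω i j * Real.log (p m)
            + ω i j * (-Real.log (Z j) - C j)) := by
      intro j _
      have : L j m = Real.log (W j m) - ρ⁻¹ * D j m - Real.log (Z j) - Real.log (p m) := hlog j m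
      rw [this]; ring
    rw [h1, Finset.sum_congr rfl h2, ← Finset.mul_sum]
    congr 1
    rw [Finset.sum_add_distrib, Finset.sum_sub_distrib, ← Finset.sum_mul, hωsum i, one_mul,
      hAdef, hαdef]
    ring
  have hfA : ∀ m, p m * Real.exp (V m / p m) = Real.exp (A m + α) := by
    intro m
    rw [hVk m, mul_div_cancel_left₀ _ (hp m).ne',
      show A m + α - Real.log (p m) = (A m + α) + -Real.log (p m) by ring,
      Real.exp_add, Real.exp_neg, Real.exp_log (hp m)]
    rw [mul_comm, mul_assoc, inv_mul_cancel₀ (hp m).ne', mul_one]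
  -- the RHS argument
  set β : ℝ := ∑ j ∈ N i,
    ω i j * (-Real.log (1 / (c : ℝ)) - (∑ l, Real.log (W j l / bary c l)) / c) with hβdef
  set U : Fin c → ℝ :=
    ∑ j ∈ N i, ω i j • (expInv (bary c) (W j) - ρ⁻¹ • D j) with hUdef
  have hUk : ∀ m, U m = A m + β := by
    intro m
    have h1 : U m = ∑ j ∈ N i,
        ω i j * ((Real.log (W j m / bary c m) - (∑ l, Real.log (W j l / bary c l)) / c)
          - ρ⁻¹ * D j m) := by
      simp only [hUdef, Finset.sum_apply, Pi.smul_apply, smul_eq_mul, Pi.sub_apply, expInv, proj0]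
    have hbm : ∀ m : Fin c, bary c m = 1 / (c : ℝ) := fun _ => rfl
    have h2 : ∀ j ∈ N i, ω i j * ((Real.log (W j m / bary c m)
          - (∑ l, Real.log (W j l / bary c l)) / c) - ρ⁻¹ * D j m)
        = ω i j * (Real.log (W j m) - ρ⁻¹ * D j m)
          + ω i j * (-Real.log (1 / (c : ℝ)) - (∑ l, Real.log (W j l / bary c l)) / c) := by
      intro j _
      rw [hbm, Real.log_div ((hW j).1 m).ne' (by positivity : (1 : ℝ) / (c : ℝ) ≠ 0)]
      ring
    rw [h1, Finset.sum_congr rfl h2, Finset.sum_add_distrib, hAdef, hβdef]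
  have hgB : ∀ m, bary c m * Real.exp (U m) = Real.exp (A m + (β + Real.log (1 / (c : ℝ)))) := by
    intro m
    have : A m + (β + Real.log (1 / (c : ℝ))) = (A m + β) + Real.log (1 / (c : ℝ)) := by ring
    rw [this, Real.exp_add, Real.exp_log (by positivity : (0:ℝ) < 1 / (c : ℝ)), hUk m]
    show (1 : ℝ) / (c : ℝ) * Real.exp (A m + β) = _
    ring
  -- finish
  show p k * Real.exp (V k / p k) / ∑ m, p m * Real.exp (V m / p m)
      = bary c k * Real.exp (U k) / ∑ m, bary c m * Real.exp (U m)
  exact norm_ratio (fun m => p m * Real.exp (V m / p m)) (fun m => bary c m * Real.exp (U m))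
    (fun m => mul_pos (hp m) (Real.exp_pos _))
    (fun m => mul_pos (show (0:ℝ) < bary c m from by
        rw [show bary c m = 1 / (c : ℝ) from rfl]; positivity) (Real.exp_pos _))
    (fun a b => by
      rw [hfA, hfA, hgB, hgB, ← Real.exp_add, ← Real.exp_add]
      ring_nf) k
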